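/- Let N be a commutative group and E a type, and let dil : N → E → E → E be a dilation structure. Then for all a, c ∈ N and every B : E → E → E: (a − B)·(dil c) = (a*c) − (B·(dil c)) as binary operations on E, i.e., for all e, x ∈ E, (a − B) e (dil c e x) = (B·(dil c)) (dil (a*c) e x) (dil (a*c)⁻¹ (dil (a*c) e x) e). -/
import Mathlib

/-- Difference combinator: `(a − B) e x := B (dil a e x) (dil a⁻¹ (dil a e x) e)`. -/
def emDiff {N E : Type*} [CommGroup N] (dil : N → E → E → E) (a : N)
    (B : E → E → E) : E → E → E :=
  fun e x => B (dil a e x) (dil a⁻¹ (dil a e x) e)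

/-- Product of binary operations: `(B·C) e x := B e (C e x)`. -/
def emProd {E : Type*} (B C : E → E → E) : E → E → E :=
  fun e x => B e (C e x)

theorem stmt_18 (N E : Type*) [CommGroup N] (dil : N → E → E → E)
    (hid : ∀ e x : E, dil 1 e x = x)
    (hact : ∀ (a b : N) (e x : E), dil a e (dil b e x) = dil (a * b) e x)
    (hR1 : ∀ (a : N) (x : E), dil a x x = x) :
    ∀ (a c : N) (B : E → E → E),
      emProd (emDiff dil a B) (dil c) = emDiff dil (a * c) (emProd B (dil c)) ∧
      ∀ e x : E,
        emDiff dil a B e (dil c e x) =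
          emProd B (dil c) (dil (a * c) e x) (dil (a * c)⁻¹ (dil (a * c) e x) e) := by
  intro a c B
  have key : ∀ e x : E,
      emDiff dil a B e (dil c e x) =
        emProd B (dil c) (dil (a * c) e x) (dil (a * c)⁻¹ (dil (a * c) e x) e) := by
    intro e x
    simp only [emDiff, emProd, hact]
    have h : (c * (a * c)⁻¹ : N) = a⁻¹ := by group
    rw [h]
  constructor
  · funext e x
    exact key e x
  · exact key
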